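/- For λ ∈ ρ(A_B), the M-function is well-defined as a map M_B(λ) : Z′ → Z by M_B(λ)(Γ_1 − BΓ_0)u = Γ_0 u for all u ∈ Z_λ with Γ_0 u ∈ D(B); explicitly, M_B(λ) = pr_ζ (I − (A_B − λ)^{-1}(A_max − λ)) A_β^{-1} i_{Z′→H}. In particular, for each f ∈ Z′ there is a unique z^λ ∈ Z_λ with Γ_0 z^λ ∈ D(B) and (Γ_1 − BΓ_0) z^λ = f. -/
import Mathlib


open scoped InnerProductSpace

/-- **Lemma 2.8.** For `λ ∈ ρ(A_B)`, the `M`-function is well defined as a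
map `M_B(λ) : Z′ → Z` by `M_B(λ)(Γ₁ − BΓ₀)u = Γ₀ u` for all `u ∈ Z_λ` with `Γ₀ u ∈ D(B)`;
explicitly `M_B(λ) = pr_ζ (I − (A_B − λ)⁻¹(A_max − λ)) A_β⁻¹ i_{Z′→H}`.  In particular, for
each `f ∈ Z′` there is a unique `z^λ ∈ Z_λ` with `Γ₀ z^λ ∈ D(B)` and `(Γ₁ − BΓ₀) z^λ = f`. -/
theorem stmt_11
    {H : Type*} [NormedAddCommGroup H] [InnerProductSpace ℂ H] [CompleteSpace H]
    (D D' Dβ DAB : Submodule ℂ H) (hβD : Dβ ≤ D) (hABD : DAB ≤ D)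
    (A : D →ₗ[ℂ] H) (A' : D' →ₗ[ℂ] H) (μ : ℂ)
    -- 0 ∈ ρ(A_β)
    (Aβinv : H →L[ℂ] H)
    (h0ran : ∀ f : H, Aβinv f ∈ Dβ)
    (h0left : ∀ u : D, (u : H) ∈ Dβ → Aβinv (A u) = (u : H))
    (h0right : ∀ f : H, A ⟨Aβinv f, hβD (h0ran f)⟩ = f)
    -- PZ' : orthogonal projection onto Z′ = ker A_max′
    (PZ' : H →L[ℂ] H)
    (hPZ'mem : ∀ x : H, ∃ h : PZ' x ∈ D', A' ⟨PZ' x, h⟩ = 0)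
    (hPZ'fix : ∀ z : D', A' z = 0 → PZ' z = (z : H))
    (hPZ'orth : ∀ x : H, ∀ z : D', A' z = 0 → ⟪x - PZ' x, (z : H)⟫_ℂ = 0)
    -- B : Z → Z′ closed and densely defined
    (B : H →ₗ.[ℂ] H)
    (hBdom : B.domain ≤ (LinearMap.ker A).map D.subtype)
    (hBran : ∀ x : B.domain, B x ∈ (LinearMap.ker A').map D'.subtype)
    -- A_B : D(A_B) = {u ∈ D(A_max) : Γ₀u ∈ D(B), Γ₁u = B Γ₀u}
    (hDAB : ∀ u : D, (u : H) ∈ DAB ↔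
      ∃ h : ((u : H) - Aβinv (A u)) ∈ B.domain,
        PZ' (A u) = B ⟨(u : H) - Aβinv (A u), h⟩)
    -- μ ∈ ρ(A_B): bounded resolvent RB of A_B − μ
    (RB : H →L[ℂ] H)
    (hRBmem : ∀ f : H, RB f ∈ DAB)
    (hRBD : ∀ f : H, RB f ∈ D)
    (hRBleft : ∀ u : D, (u : H) ∈ DAB → RB (A u - μ • (u : H)) = (u : H))
    (hRBright : ∀ f : H, A ⟨RB f, hRBD f⟩ - μ • RB f = f) :
    let Z' : Submodule ℂ H := (LinearMap.ker A').map D'.subtype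
    ∀ f ∈ Z',
      -- unique z^λ ∈ Z_λ with Γ₀ z^λ ∈ D(B) and (Γ₁ − BΓ₀) z^λ = f
      (∃! z : H, ∃ hz : z ∈ D, A ⟨z, hz⟩ = μ • z ∧
        ∃ hb : (z - Aβinv (A ⟨z, hz⟩)) ∈ B.domain,
          PZ' (A ⟨z, hz⟩) - B ⟨z - Aβinv (A ⟨z, hz⟩), hb⟩ = f) ∧
      -- explicitly, z^λ = (I − (A_B − λ)⁻¹(A_max − λ)) A_β⁻¹ f, so that
      -- M_B(λ) f = pr_ζ z^λ, i.e. M_B(λ) = pr_ζ (I − (A_B−λ)⁻¹(A_max−λ)) A_β⁻¹ i_{Z′→H}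
      (∃ hz : (Aβinv f - RB (f - μ • Aβinv f)) ∈ D,
        A ⟨Aβinv f - RB (f - μ • Aβinv f), hz⟩ = μ • (Aβinv f - RB (f - μ • Aβinv f)) ∧
        ∃ hb : ((Aβinv f - RB (f - μ • Aβinv f)) -
            Aβinv (A ⟨Aβinv f - RB (f - μ • Aβinv f), hz⟩)) ∈ B.domain,
          PZ' (A ⟨Aβinv f - RB (f - μ • Aβinv f), hz⟩) -
            B ⟨(Aβinv f - RB (f - μ • Aβinv f)) -
                Aβinv (A ⟨Aβinv f - RB (f - μ • Aβinv f), hz⟩), hb⟩ = f) := by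
  intro Z' f hf
  obtain ⟨f', hf'ker, hf'eq⟩ := hf
  have hPf : PZ' f = f := by
    rw [← hf'eq]; exact hPZ'fix f' hf'ker
  set w := Aβinv f with hw
  have hwβ : w ∈ Dβ := h0ran f
  have hwD : w ∈ D := hβD hwβ
  have hAw : A ⟨w, hwD⟩ = f := h0right f
  set v := RB (f - μ • w) with hv
  have hvAB : v ∈ DAB := hRBmem _
  have hvD : v ∈ D := hRBD _
  have hAv : A ⟨v, hvD⟩ = f - μ • w + μ • v := by
    have h2 : A ⟨v, hvD⟩ - μ • v = f - μ • w := hRBright (f - μ • w)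
    rw [sub_eq_iff_eq_add] at h2
    exact h2
  have hz : w - v ∈ D := D.sub_mem hwD hvD
  have hsplit : (⟨w - v, hz⟩ : D) = ⟨w, hwD⟩ - ⟨v, hvD⟩ := rfl
  have hAz : A ⟨w - v, hz⟩ = μ • (w - v) := by
    rw [hsplit, map_sub, hAw, hAv]; module
  obtain ⟨hbv, hBv⟩ := (hDAB ⟨v, hvD⟩).mp hvAB
  have hAβAv : Aβinv (A ⟨v, hvD⟩) = w - μ • Aβinv w + μ • Aβinv v := by
    rw [hAv, map_add, map_sub, map_smul, map_smul, ← hw]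
  have hkey : (w - v) - Aβinv (A ⟨w - v, hz⟩) = -(v - Aβinv (A ⟨v, hvD⟩)) := by
    rw [hAz, map_smul, map_sub, hAβAv]; module
  have hb : (w - v) - Aβinv (A ⟨w - v, hz⟩) ∈ B.domain := by
    rw [hkey]; exact neg_mem hbv
  have hBval : B ⟨(w - v) - Aβinv (A ⟨w - v, hz⟩), hb⟩
      = -(B ⟨v - Aβinv (A ⟨v, hvD⟩), hbv⟩) := by
    have heq : (⟨(w - v) - Aβinv (A ⟨w - v, hz⟩), hb⟩ : B.domain)
        = -(⟨v - Aβinv (A ⟨v, hvD⟩), hbv⟩ : B.domain) := Subtype.ext hkey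
    rw [heq]
    exact B.toFun.map_neg _
  have hfinal : PZ' (A ⟨w - v, hz⟩)
      - B ⟨(w - v) - Aβinv (A ⟨w - v, hz⟩), hb⟩ = f := by
    rw [hBval, ← hBv, sub_neg_eq_add, ← map_add]
    have hsum : A ⟨w - v, hz⟩ + A ⟨v, hvD⟩ = f := by
      rw [hAz, hAv]; module
    rw [hsum, hPf]
  refine ⟨⟨w - v, ⟨hz, hAz, hb, hfinal⟩, ?_⟩, hz, hAz, hb, hfinal⟩
  rintro y ⟨hyD, hAy, hby, hyval⟩
  have hdD : y - (w - v) ∈ D := D.sub_mem hyD hz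
  have hdsplit : (⟨y - (w - v), hdD⟩ : D) = ⟨y, hyD⟩ - ⟨w - v, hz⟩ := rfl
  have hAd : A ⟨y - (w - v), hdD⟩ = μ • (y - (w - v)) := by
    rw [hdsplit, map_sub, hAy, hAz]; module
  have hdkey : (y - (w - v)) - Aβinv (A ⟨y - (w - v), hdD⟩)
      = (y - Aβinv (A ⟨y, hyD⟩)) - ((w - v) - Aβinv (A ⟨w - v, hz⟩)) := by
    rw [hAd, hAy, hAz]
    simp only [map_smul, map_sub]
    module
  have hbd : (y - (w - v)) - Aβinv (A ⟨y - (w - v), hdD⟩) ∈ B.domain := by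
    rw [hdkey]; exact B.domain.sub_mem hby hb
  have hBd : B ⟨(y - (w - v)) - Aβinv (A ⟨y - (w - v), hdD⟩), hbd⟩
      = B ⟨y - Aβinv (A ⟨y, hyD⟩), hby⟩
        - B ⟨(w - v) - Aβinv (A ⟨w - v, hz⟩), hb⟩ := by
    have heq : (⟨(y - (w - v)) - Aβinv (A ⟨y - (w - v), hdD⟩), hbd⟩ : B.domain)
        = (⟨y - Aβinv (A ⟨y, hyD⟩), hby⟩ : B.domain)
          - ⟨(w - v) - Aβinv (A ⟨w - v, hz⟩), hb⟩ := Subtype.ext hdkey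
    rw [heq]
    exact B.toFun.map_sub _ _
  have hdAB : y - (w - v) ∈ DAB := by
    refine (hDAB ⟨y - (w - v), hdD⟩).mpr ⟨hbd, ?_⟩
    rw [hBd]
    have hAd' : A ⟨y - (w - v), hdD⟩ = A ⟨y, hyD⟩ - A ⟨w - v, hz⟩ := by
      rw [hdsplit, map_sub]
    rw [hAd', map_sub]
    have h3 : PZ' (A ⟨y, hyD⟩) - B ⟨y - Aβinv (A ⟨y, hyD⟩), hby⟩
        = PZ' (A ⟨w - v, hz⟩) - B ⟨(w - v) - Aβinv (A ⟨w - v, hz⟩), hb⟩ :=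
      hyval.trans hfinal.symm
    rw [sub_eq_sub_iff_sub_eq_sub] at h3
    exact h3
  have hres := hRBleft ⟨y - (w - v), hdD⟩ hdAB
  simp only at hres
  rw [hAd, sub_self, map_zero] at hres
  exact (sub_eq_zero.mp hres.symm)
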